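/- For a countable semigroup S the following are equivalent: (1) S is ℵ₀-categorical; (2) the semigroup S⁰, obtained from S by adjoining a new absorbing zero element, is ℵ₀-categorical; (3) the semigroup S¹, obtained from S by adjoining a new identity element, is ℵ₀-categorical. -/

import Mathlib

/-- Two `n`-tuples of a semigroup are automorphically equivalent if some semigroup
automorphism maps one to the other componentwise. -/
def AutRel (S : Type*) [Semigroup S] {n : ℕ} (a b : Fin n → S) : Prop :=
  ∃ φ : S ≃* S, ∀ k, φ (a k) = b k

/-- A semigroup is ℵ₀-categorical if, for every `n ≥ 1`, the action of its automorphism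
group on `n`-tuples has only finitely many orbits. -/
def Aleph0Categorical (S : Type*) [Semigroup S] : Prop :=
  ∀ n : ℕ, 1 ≤ n → ∃ t : Set (Fin n → S), t.Finite ∧
    ∀ a : Fin n → S, ∃ b ∈ t, AutRel S b a

/-- Abstract transfer lemma: if `T` is obtained from `S` by adjoining one new element `o`,
every automorphism of `T` fixes `o`, and automorphisms of `S` extend to `T`, then
ℵ₀-categoricity transfers between `S` and `T`. -/
private lemma aux_transfer {S T : Type*} [Semigroup S] [Semigroup T]
    (i : S → T) (imul : ∀ a b : S, i (a * b) = i a * i b) (hi : Function.Injective i)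
    (o : T) (ho : ∀ x : T, x = o ∨ ∃ s, x = i s) (hio : ∀ s, i s ≠ o)
    (hfix : ∀ Φ : T ≃* T, Φ o = o)
    (ext : (S ≃* S) → (T ≃* T)) (hext : ∀ φ s, ext φ (i s) = i (φ s)) :
    Aleph0Categorical S ↔ Aleph0Categorical T := by
  classical
  -- every automorphism of T restricts to S
  have key : ∀ (Φ : T ≃* T) (s : S), ∃ u : S, Φ (i s) = i u := by
    intro Φ s
    rcases ho (Φ (i s)) with h | hu
    · exact absurd (Φ.injective (h.trans (hfix Φ).symm)) (hio s)
    · exact hu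
  set r : (T ≃* T) → S → S := fun Φ s => (key Φ s).choose with hr
  have hrspec : ∀ (Φ : T ≃* T) (s : S), Φ (i s) = i (r Φ s) := fun Φ s => (key Φ s).choose_spec
  have hrinv : ∀ (Φ : T ≃* T) (s : S), r Φ.symm (r Φ s) = s := by
    intro Φ s
    apply hi
    rw [← hrspec Φ.symm, ← hrspec Φ, Φ.symm_apply_apply]
  have res : ∀ Φ : T ≃* T, ∃ φ : S ≃* S, ∀ s, φ s = r Φ s := by
    intro Φ
    refine ⟨⟨⟨r Φ, r Φ.symm, hrinv Φ, ?_⟩, ?_⟩, fun s => rfl⟩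
    · intro s
      have := hrinv Φ.symm s
      rwa [Φ.symm_symm] at this
    · intro a b
      apply hi
      simp only [Equiv.coe_fn_mk]
      rw [← hrspec, imul, imul, map_mul, hrspec, hrspec]
  constructor
  · -- S categorical → T categorical
    intro hS n hn
    by_cases hE : IsEmpty S
    · refine ⟨{fun _ => o}, Set.finite_singleton _, fun a => ⟨fun _ => o, rfl, MulEquiv.refl T, ?_⟩⟩
      intro k
      rcases ho (a k) with h | ⟨s, _⟩
      · simp [h]
      · exact hE.elim s
    · obtain ⟨s₀⟩ := not_isEmpty_iff.mp hE
      obtain ⟨t, ht, hcov⟩ := hS n hn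
      refine ⟨(fun p : (Fin n → S) × (Fin n → Bool) => fun k => if p.2 k then o else i (p.1 k)) ''
        (t ×ˢ (Set.univ : Set (Fin n → Bool))), (ht.prod (Set.finite_univ)).image _, ?_⟩
      intro a
      set f : Fin n → Bool := fun k => decide (¬ ∃ s, a k = i s) with hf
      set abar : Fin n → S := fun k => if h : ∃ s, a k = i s then h.choose else s₀ with habar
      obtain ⟨b, hb, φ, hφ⟩ := hcov abar
      refine ⟨fun k => if f k then o else i (b k), ⟨(b, f), ⟨hb, trivial⟩, rfl⟩, ext φ, ?_⟩
      intro k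
      by_cases h : ∃ s, a k = i s
      · have hfk : f k = false := decide_eq_false (not_not_intro h)
        have habark : abar k = h.choose := by simp only [habar]; rw [dif_pos h]
        show (ext φ) (if f k = true then o else i (b k)) = a k
        rw [hfk, if_neg Bool.false_ne_true, hext, hφ k, habark]
        exact h.choose_spec.symm
      · have hfk : f k = true := decide_eq_true h
        have hak : a k = o := (ho (a k)).resolve_right h
        show (ext φ) (if f k = true then o else i (b k)) = a k
        rw [hfk, if_pos rfl, hak]
        exact hfix (ext φ)
  · -- T categorical → S categorical
    intro hT n hn
    obtain ⟨t, ht, hcov⟩ := hT n hn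
    have hginj : Function.Injective (fun (b : Fin n → S) (k : Fin n) => i (b k)) := by
      intro b c h
      funext k
      exact hi (congrFun h k)
    refine ⟨(fun (b : Fin n → S) (k : Fin n) => i (b k)) ⁻¹' t, ht.preimage hginj.injOn, ?_⟩
    intro a
    obtain ⟨c, hc, Φ, hΦ⟩ := hcov (fun k => i (a k))
    have hΦ' : ∀ k, Φ (c k) = i (a k) := hΦ
    have hck : ∀ k, ∃ s, c k = i s := by
      intro k
      rcases ho (c k) with h | h
      · exfalso
        apply hio (a k)
        rw [← hΦ' k, h, hfix Φ]
      · exact h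
    set b : Fin n → S := fun k => (hck k).choose with hb
    have hbk : ∀ k, c k = i (b k) := fun k => (hck k).choose_spec
    obtain ⟨φ, hφ⟩ := res Φ
    refine ⟨b, ?_, φ, ?_⟩
    · show (fun k => i (b k)) ∈ t
      have : (fun k => i (b k)) = c := funext fun k => (hbk k).symm
      rwa [this]
    · intro k
      apply hi
      rw [hφ, ← hrspec, ← hbk, hΦ']

/-- Extension of an automorphism of `S` to `WithZero S`. -/
private def extZero {S : Type*} [Semigroup S] (φ : S ≃* S) : WithZero S ≃* WithZero S where
  toFun := WithZero.recZeroCoe 0 (fun s => (φ s : WithZero S))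
  invFun := WithZero.recZeroCoe 0 (fun s => (φ.symm s : WithZero S))
  left_inv x := by induction x using WithZero.recZeroCoe <;> simp
  right_inv x := by induction x using WithZero.recZeroCoe <;> simp
  map_mul' a b := by
    induction a using WithZero.recZeroCoe <;> induction b using WithZero.recZeroCoe <;>
      simp [← WithZero.coe_mul]

/-- For a countable semigroup `S` the following are equivalent: `S` is ℵ₀-categorical;
`S⁰` (here `WithZero S`, `S` with a new absorbing zero adjoined) is ℵ₀-categorical;
`S¹` (here `WithOne S`, `S` with a new identity adjoined) is ℵ₀-categorical. -/
theorem aleph0Categorical_withZero_withOne (S : Type*) [Semigroup S] [Countable S] :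
    (Aleph0Categorical S ↔ Aleph0Categorical (WithZero S)) ∧
    (Aleph0Categorical S ↔ Aleph0Categorical (WithOne S)) := by
  constructor
  · refine aux_transfer (fun s => (s : WithZero S)) (fun a b => rfl)
      (fun a b h => WithZero.coe_inj.mp h) 0 ?_ (fun s => WithZero.coe_ne_zero) ?_
      extZero (fun φ s => rfl)
    · intro x
      induction x using WithZero.recZeroCoe with
      | zero => exact Or.inl rfl
      | coe s => exact Or.inr ⟨s, rfl⟩
    · intro Φ
      calc Φ 0 = Φ (0 * Φ.symm 0) := by rw [zero_mul]
        _ = Φ 0 * Φ (Φ.symm 0) := map_mul Φ _ _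
        _ = Φ 0 * 0 := by rw [Φ.apply_symm_apply]
        _ = 0 := mul_zero _
  · refine aux_transfer (fun s => (s : WithOne S)) (fun a b => rfl)
      (fun a b h => WithOne.coe_inj.mp h) 1 ?_ (fun s => WithOne.coe_ne_one) ?_
      (fun φ => φ.withOneCongr) (fun φ s => by simp [MulEquiv.withOneCongr]) 
    · intro x
      induction x using WithOne.recOneCoe with
      | one => exact Or.inl rfl
      | coe s => exact Or.inr ⟨s, rfl⟩
    · intro Φ
      calc Φ 1 = Φ 1 * 1 := (mul_one _).symm
        _ = Φ 1 * Φ (Φ.symm 1) := by rw [Φ.apply_symm_apply]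
        _ = Φ (1 * Φ.symm 1) := (map_mul Φ _ _).symm
        _ = Φ (Φ.symm 1) := by rw [one_mul]
        _ = 1 := Φ.apply_symm_apply 1
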